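/- For any two sequences σ1 (with last visit u) and σ2 (with first visit v), the earliest optimal start time of the concatenation satisfies E(σ1 ⊕ σ2) = max(E(σ2) − δ, E(σ1)) − Δ_WT, where δ = D(σ1) − TW(σ1) + d_{u v} and Δ_WT = max(E(σ2) − δ − L(σ1), 0). -/
import Mathlib


variable {V : Type*}

/-- Service start time at a visit: `h = max(a v, min(τ, b v))`. -/
noncomputable def svcStart (a b : V → ℝ) (v : V) (t : ℝ) : ℝ :=
  max (a v) (min t (b v))

/-- Completion time `C(σ, t)` of the forward schedule of `σ` started at `t`. -/
noncomputable def comp (a b s : V → ℝ) (d : V → V → ℝ) : List V → ℝ → ℝ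
  | [], t => t
  | [v], t => svcStart a b v t + s v
  | v :: w :: rest, t => comp a b s d (w :: rest) (svcStart a b v t + s v + d v w)

/-- Total time warp `W(σ, t)` of the forward schedule of `σ` started at `t`. -/
noncomputable def warp (a b s : V → ℝ) (d : V → V → ℝ) : List V → ℝ → ℝ
  | [], _ => 0
  | [v], t => max (t - b v) 0
  | v :: w :: rest, t =>
      max (t - b v) 0 + warp a b s d (w :: rest) (svcStart a b v t + s v + d v w)

/-- Active duration `A(σ, t) = C(σ, t) − t + W(σ, t)`. -/
noncomputable def activeDur (a b s : V → ℝ) (d : V → V → ℝ) (σ : List V) (t : ℝ) : ℝ :=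
  comp a b s d σ t - t + warp a b s d σ t

/-- Minimum time warp `TW(σ) = min_t W(σ, t)`. -/
noncomputable def TWv (a b s : V → ℝ) (d : V → V → ℝ) (σ : List V) : ℝ :=
  sInf (Set.range fun t => warp a b s d σ t)

/-- Latest start time achieving the minimum time warp: `L(σ) = max {t : W(σ,t) = TW(σ)}`. -/
noncomputable def Lv (a b s : V → ℝ) (d : V → V → ℝ) (σ : List V) : ℝ :=
  sSup {t | warp a b s d σ t = TWv a b s d σ}

/-- Minimum active duration `D(σ) = min_t A(σ, t)`. -/
noncomputable def Dv (a b s : V → ℝ) (d : V → V → ℝ) (σ : List V) : ℝ :=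
  sInf (Set.range fun t => activeDur a b s d σ t)

/-- Earliest start time achieving the minimum duration: `E(σ) = min {t : A(σ,t) = D(σ)}`. -/
noncomputable def Ev (a b s : V → ℝ) (d : V → V → ℝ) (σ : List V) : ℝ :=
  sInf {t | activeDur a b s d σ t = Dv a b s d σ}

section Aux

variable (a b s : V → ℝ) (d : V → V → ℝ)

set_option maxHeartbeats 1600000 in
lemma key_warp (E1 L1 L2 δ t : ℝ) (h1 : E1 ≤ L1) :
    max (t - L1) 0 + max (min (max t E1) L1 + δ - L2) 0
      = max (E1 + δ - L2) 0 + max (t - max (min (L2 - δ) L1) E1) 0 := by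
  simp only [max_def, min_def]
  split_ifs <;> linarith

set_option maxHeartbeats 3200000 in
lemma key_comp (E1 L1 E2 L2 δ t : ℝ) (h1 : E1 ≤ L1) (h2 : E2 ≤ L2) :
    min (max (min (max t E1) L1 + δ) E2) L2
      = min (max t (max (E2 - δ) E1 - max (E2 - δ - L1) 0)) (max (min (L2 - δ) L1) E1)
        + (δ + max (E2 - δ - L1) 0 - max (E1 + δ - L2) 0) := by
  simp only [max_def, min_def]
  split_ifs <;> linarith

set_option maxHeartbeats 1600000 in
lemma key_EL (E1 L1 E2 L2 δ : ℝ) (h1 : E1 ≤ L1) (h2 : E2 ≤ L2) :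
    max (E2 - δ) E1 - max (E2 - δ - L1) 0 ≤ max (min (L2 - δ) L1) E1 := by
  simp only [max_def, min_def]
  split_ifs <;> linarith

lemma key_active (E L D TW t : ℝ) (h : E ≤ L) :
    min (max t E) L + (D - TW) - t + (TW + max (t - L) 0) = D + max (E - t) 0 := by
  simp only [max_def, min_def]
  split_ifs <;> linarith

lemma comp_append (v : V) (l2 : List V) :
    ∀ (σ1 : List V) (u : V), σ1.getLast? = some u → ∀ t : ℝ,
      comp a b s d (σ1 ++ v :: l2) t
        = comp a b s d (v :: l2) (comp a b s d σ1 t + d u v)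
  | [], u, hu => by simp at hu
  | [x], u, hu => by
      simp only [List.getLast?_singleton, Option.some.injEq] at hu
      subst hu
      intro t
      rfl
  | x :: y :: r, u, hu => by
      intro t
      have hu' : (y :: r).getLast? = some u := by
        rwa [List.getLast?_cons_cons] at hu
      have h := comp_append v l2 (y :: r) u hu' (svcStart a b x t + s x + d x y)
      show comp a b s d ((y :: r) ++ v :: l2) (svcStart a b x t + s x + d x y) = _
      rw [h]
      rfl

lemma warp_append (v : V) (l2 : List V) :
    ∀ (σ1 : List V) (u : V), σ1.getLast? = some u → ∀ t : ℝ,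
      warp a b s d (σ1 ++ v :: l2) t
        = warp a b s d σ1 t + warp a b s d (v :: l2) (comp a b s d σ1 t + d u v)
  | [], u, hu => by simp at hu
  | [x], u, hu => by
      simp only [List.getLast?_singleton, Option.some.injEq] at hu
      subst hu
      intro t
      rfl
  | x :: y :: r, u, hu => by
      intro t
      have hu' : (y :: r).getLast? = some u := by
        rwa [List.getLast?_cons_cons] at hu
      have h := warp_append v l2 (y :: r) u hu' (svcStart a b x t + s x + d x y)
      show max (t - b x) 0 + warp a b s d ((y :: r) ++ v :: l2)
          (svcStart a b x t + s x + d x y) = _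
      rw [h]
      show _ = max (t - b x) 0 + warp a b s d (y :: r) (svcStart a b x t + s x + d x y)
        + warp a b s d (v :: l2)
          (comp a b s d (y :: r) (svcStart a b x t + s x + d x y) + d u v)
      ring

/-- The structural invariant: `W(σ,t) = TW + (t-L)⁺` and
`C(σ,t) = clamp(t, E, L) + (D - TW)`. -/
def SchedInv (σ : List V) (TW L D E : ℝ) : Prop :=
  E ≤ L ∧ ∀ t : ℝ, warp a b s d σ t = TW + max (t - L) 0 ∧
    comp a b s d σ t = min (max t E) L + (D - TW)

lemma schedInv_single (hab : ∀ w, a w ≤ b w) (x : V) :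
    SchedInv a b s d [x] 0 (b x) (s x) (a x) := by
  refine ⟨hab x, fun t => ⟨by simp [warp], ?_⟩⟩
  show svcStart a b x t + s x = _
  rw [svcStart, max_min_distrib_left, max_eq_right (hab x)]
  rw [max_comm]
  ring

lemma schedInv_combine (σ1 σ2 : List V) (u v : V) (hu : σ1.getLast? = some u)
    (hv : σ2.head? = some v)
    {TW1 L1 D1 E1 TW2 L2 D2 E2 : ℝ}
    (h1 : SchedInv a b s d σ1 TW1 L1 D1 E1) (h2 : SchedInv a b s d σ2 TW2 L2 D2 E2) :
    SchedInv a b s d (σ1 ++ σ2)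
      (TW1 + TW2 + max (E1 + (D1 - TW1 + d u v) - L2) 0)
      (max (min (L2 - (D1 - TW1 + d u v)) L1) E1)
      (D1 + D2 + d u v + max (E2 - (D1 - TW1 + d u v) - L1) 0)
      (max (E2 - (D1 - TW1 + d u v)) E1 - max (E2 - (D1 - TW1 + d u v) - L1) 0) := by
  obtain ⟨l2, rfl⟩ : ∃ l2, σ2 = v :: l2 := by
    cases σ2 with
    | nil => simp at hv
    | cons h tl =>
        simp only [List.head?_cons, Option.some.injEq] at hv
        exact ⟨tl, by rw [hv]⟩
  set δ : ℝ := D1 - TW1 + d u v with hδ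
  refine ⟨key_EL E1 L1 E2 L2 δ h1.1 h2.1, fun t => ?_⟩
  have hw := warp_append a b s d v l2 σ1 u hu t
  have hc := comp_append a b s d v l2 σ1 u hu t
  have hf : comp a b s d σ1 t + d u v = min (max t E1) L1 + δ := by
    rw [(h1.2 t).2]; ring
  constructor
  · rw [hw, hf, (h1.2 t).1, (h2.2 _).1]
    have := key_warp E1 L1 L2 δ t h1.1
    linarith
  · rw [hc, hf, (h2.2 _).2]
    have := key_comp E1 L1 E2 L2 δ t h1.1 h2.1
    linarith

lemma schedInv_exists (hab : ∀ w, a w ≤ b w) :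
    ∀ (σ : List V), σ ≠ [] → ∃ TW L D E, SchedInv a b s d σ TW L D E
  | [], h => absurd rfl h
  | [x], _ => ⟨_, _, _, _, schedInv_single a b s d hab x⟩
  | x :: y :: r, _ => by
      obtain ⟨TW2, L2, D2, E2, h2⟩ := schedInv_exists hab (y :: r) (by simp)
      exact ⟨_, _, _, _, schedInv_combine a b s d [x] (y :: r) x y rfl rfl
        (schedInv_single a b s d hab x) h2⟩

lemma schedInv_TWv {σ : List V} {TW L D E : ℝ} (h : SchedInv a b s d σ TW L D E) :
    TWv a b s d σ = TW := by
  refine le_antisymm (csInf_le ⟨TW, ?_⟩ ⟨L, ?_⟩) (le_csInf ⟨_, ⟨L, rfl⟩⟩ ?_)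
  · rintro x ⟨t, rfl⟩
    show TW ≤ warp a b s d σ t
    rw [(h.2 t).1]
    have : (0:ℝ) ≤ max (t - L) 0 := le_max_right _ _
    linarith
  · show warp a b s d σ L = TW
    rw [(h.2 L).1]; simp
  · rintro x ⟨t, rfl⟩
    show TW ≤ warp a b s d σ t
    rw [(h.2 t).1]
    have : (0:ℝ) ≤ max (t - L) 0 := le_max_right _ _
    linarith

lemma schedInv_Lv {σ : List V} {TW L D E : ℝ} (h : SchedInv a b s d σ TW L D E) :
    Lv a b s d σ = L := by
  have hset : {t : ℝ | warp a b s d σ t = TWv a b s d σ} = Set.Iic L := by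
    ext t
    rw [Set.mem_setOf_eq, schedInv_TWv a b s d h, (h.2 t).1, Set.mem_Iic]
    constructor
    · intro ht
      by_contra hlt
      push_neg at hlt
      have hm : max (t - L) 0 = t - L := max_eq_left (by linarith)
      rw [hm] at ht; linarith
    · intro ht
      rw [max_eq_right (by linarith)]
      ring
  rw [Lv, hset, csSup_Iic]

lemma schedInv_activeDur {σ : List V} {TW L D E : ℝ} (h : SchedInv a b s d σ TW L D E)
    (t : ℝ) : activeDur a b s d σ t = D + max (E - t) 0 := by
  rw [activeDur, (h.2 t).1, (h.2 t).2]
  exact key_active E L D TW t h.1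

lemma schedInv_Dv {σ : List V} {TW L D E : ℝ} (h : SchedInv a b s d σ TW L D E) :
    Dv a b s d σ = D := by
  refine le_antisymm (csInf_le ⟨D, ?_⟩ ⟨E, ?_⟩) (le_csInf ⟨_, ⟨E, rfl⟩⟩ ?_)
  · rintro x ⟨t, rfl⟩
    show D ≤ activeDur a b s d σ t
    rw [schedInv_activeDur a b s d h t]
    have : (0:ℝ) ≤ max (E - t) 0 := le_max_right _ _
    linarith
  · show activeDur a b s d σ E = D
    rw [schedInv_activeDur a b s d h E]; simp
  · rintro x ⟨t, rfl⟩
    show D ≤ activeDur a b s d σ t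
    rw [schedInv_activeDur a b s d h t]
    have : (0:ℝ) ≤ max (E - t) 0 := le_max_right _ _
    linarith

lemma schedInv_Ev {σ : List V} {TW L D E : ℝ} (h : SchedInv a b s d σ TW L D E) :
    Ev a b s d σ = E := by
  have hset : {t : ℝ | activeDur a b s d σ t = Dv a b s d σ} = Set.Ici E := by
    ext t
    rw [Set.mem_setOf_eq, schedInv_Dv a b s d h, schedInv_activeDur a b s d h t,
      Set.mem_Ici]
    constructor
    · intro ht
      by_contra hlt
      push_neg at hlt
      have hm : max (E - t) 0 = E - t := max_eq_left (by linarith)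
      rw [hm] at ht; linarith
    · intro ht
      rw [max_eq_right (by linarith)]
      ring
  rw [Ev, hset, csInf_Ici]

end Aux

/-- For sequences `σ₁` (with last visit `u`) and `σ₂` (with first visit `v`),
`E(σ₁ ⊕ σ₂) = max(E(σ₂) − δ, E(σ₁)) − Δ_WT` where `δ = D(σ₁) − TW(σ₁) + d u v` and
`Δ_WT = max(E(σ₂) − δ − L(σ₁), 0)`. -/
theorem concat_E [Fintype V]
    (a b s : V → ℝ) (d : V → V → ℝ)
    (hs : ∀ v, 0 ≤ s v) (hab : ∀ v, a v ≤ b v) (hd : ∀ u v, 0 ≤ d u v)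
    (σ₁ σ₂ : List V) (u v : V)
    (hu : σ₁.getLast? = some u) (hv : σ₂.head? = some v) :
    Ev a b s d (σ₁ ++ σ₂) =
      max (Ev a b s d σ₂ - (Dv a b s d σ₁ - TWv a b s d σ₁ + d u v)) (Ev a b s d σ₁) -
        max (Ev a b s d σ₂ - (Dv a b s d σ₁ - TWv a b s d σ₁ + d u v) - Lv a b s d σ₁) 0 := by
  have hn1 : σ₁ ≠ [] := by rintro rfl; simp at hu
  have hn2 : σ₂ ≠ [] := by rintro rfl; simp at hv
  obtain ⟨TW1, L1, D1, E1, h1⟩ := schedInv_exists a b s d hab σ₁ hn1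
  obtain ⟨TW2, L2, D2, E2, h2⟩ := schedInv_exists a b s d hab σ₂ hn2
  have hc := schedInv_combine a b s d σ₁ σ₂ u v hu hv h1 h2
  rw [schedInv_Ev a b s d hc, schedInv_Ev a b s d h1, schedInv_Ev a b s d h2,
    schedInv_Dv a b s d h1, schedInv_TWv a b s d h1, schedInv_Lv a b s d h1]
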